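/- Let n ≥ 2 and p ∈ [0,1]. Define a probability distribution on pairs (s, π), where s : Fin n → Bool and π is a permutation of Fin n, as follows: the n coordinates s(1), …, s(n) are independent with P(s(i) = true) = p for each i, and conditionally on s, the permutation π is uniformly distributed over the (nonempty, finite) set of permutations of Fin n that fix every index i with s(i) = false. Then for any two distinct indices i ≠ j, the probability of the event { s(i) = true and π(i) = j } is at most p/n. -/

import Mathlib

open MeasureTheory Finset

namespace ProbGoAux

variable {n : ℕ}

noncomputable def w (p : ℝ) (s : Fin n → Bool) : ℝ := ∏ k, if s k then p else 1 - p

def Ns (s : Fin n → Bool) : ℕ := (univ.filter fun k => s k = true).card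

noncomputable def T (p : ℝ) (i j : Fin n) : ℝ :=
  ∑ s : Fin n → Bool, (if s i = true ∧ s j = true then w p s / Ns s else 0)

lemma w_nonneg {p : ℝ} (hp : p ∈ Set.Icc (0:ℝ) 1) (s : Fin n → Bool) : 0 ≤ w p s :=
  Finset.prod_nonneg fun k _ => by
    obtain ⟨h0, h1⟩ := hp; split <;> linarith

lemma Ns_le (s : Fin n → Bool) : Ns s ≤ n := by
  simpa [Ns] using (Finset.card_filter_le univ fun k => s k = true)

lemma natCard_eq (s : Fin n → Bool) :
    Nat.card {σ : Equiv.Perm (Fin n) // ∀ k, s k = false → σ k = k}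
      = (univ.filter fun π : Equiv.Perm (Fin n) => ∀ k, s k = false → π k = k).card := by
  rw [Nat.card_eq_fintype_card, Fintype.card_subtype]

lemma natCard_pos (s : Fin n → Bool) :
    0 < Nat.card {σ : Equiv.Perm (Fin n) // ∀ k, s k = false → σ k = k} := by
  rw [natCard_eq]
  exact Finset.card_pos.mpr ⟨1, by simp⟩

lemma count_le {s : Fin n → Bool} {i j : Fin n} (hj : s j = true) :
    (univ.filter fun π : Equiv.Perm (Fin n) =>
        (∀ k, s k = false → π k = k) ∧ π i = j).card * Ns s
      ≤ (univ.filter fun π : Equiv.Perm (Fin n) => ∀ k, s k = false → π k = k).card := by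
  classical
  show _ * (univ.filter fun k => s k = true).card ≤ _
  rw [← Finset.card_product]
  apply Finset.card_le_card_of_injOn
    (fun x => Equiv.swap j x.2 * x.1)
  · rintro ⟨π, k⟩ hx
    simp only [Finset.mem_coe, Finset.mem_product, Finset.mem_filter, Finset.mem_univ, true_and] at hx ⊢
    obtain ⟨⟨hfix, hπi⟩, hk⟩ := hx
    intro m hm
    have hmj : m ≠ j := by rintro rfl; rw [hj] at hm; simp at hm
    have hmk : m ≠ k := by rintro rfl; rw [hk] at hm; simp at hm
    simp [Equiv.Perm.mul_apply, hfix m hm, Equiv.swap_apply_of_ne_of_ne hmj hmk]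
  · rintro ⟨π, k⟩ hx ⟨π', k'⟩ hx' heq
    simp only [Finset.mem_coe, Finset.mem_product, Finset.mem_filter, Finset.mem_univ,
      true_and] at hx hx'
    obtain ⟨⟨hfix, hπi⟩, hk⟩ := hx
    obtain ⟨⟨hfix', hπi'⟩, hk'⟩ := hx'
    have h1 : (Equiv.swap j k * π) i = k := by
      simp [Equiv.Perm.mul_apply, hπi]
    have h2 : (Equiv.swap j k' * π') i = k' := by
      simp [Equiv.Perm.mul_apply, hπi']
    simp only at heq
    have hkk : k = k' := by rw [← h1, ← h2, heq]
    subst hkk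
    have : π = π' := mul_left_cancel (heq : Equiv.swap j k * π = Equiv.swap j k * π')
    simp [this]

lemma Ns_comp (e : Equiv.Perm (Fin n)) (s : Fin n → Bool) :
    Ns (fun k => s (e k)) = Ns s := by
  unfold Ns
  rw [Finset.card_filter, Finset.card_filter]
  exact Equiv.sum_comp e (fun k => if s k = true then 1 else 0)

lemma w_comp (p : ℝ) (e : Equiv.Perm (Fin n)) (s : Fin n → Bool) :
    w p (fun k => s (e k)) = w p s := by
  unfold w
  exact Equiv.prod_comp e (fun k => if s k then p else 1 - p)

lemma T_swap (p : ℝ) {i j j' : Fin n} (hj : j ≠ i) (hj' : j' ≠ i) :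
    T p i j' = T p i j := by
  unfold T
  refine Fintype.sum_bijective (fun s k => s (Equiv.swap j j' k))
    (Function.Involutive.bijective fun s => by funext k; simp) _ _ fun s => ?_
  have hi : Equiv.swap j j' i = i :=
    Equiv.swap_apply_of_ne_of_ne (Ne.symm hj) (Ne.symm hj')
  have hj2 : Equiv.swap j j' j = j' := Equiv.swap_apply_left j j'
  rw [w_comp, Ns_comp]
  simp only [hi, hj2]

lemma sum_erase (s : Fin n → Bool) {i : Fin n} (hi : s i = true) (c : ℝ) :
    ∑ j' ∈ univ.erase i, (if s i = true ∧ s j' = true then c else 0)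
      = c * ((Ns s : ℝ) - 1) := by
  have h1 : ∀ j' : Fin n, (if s i = true ∧ s j' = true then c else 0)
      = if s j' = true then c else 0 := by intro j'; simp [hi]
  rw [Finset.sum_congr rfl fun j' _ => h1 j', ← Finset.sum_filter,
    Finset.sum_const, Finset.filter_erase]
  have hcard : ((univ.filter fun k => s k = true).erase i).card = Ns s - 1 := by
    rw [Finset.card_erase_of_mem (by simp [hi])]; rfl
  rw [hcard]
  have hpos : 0 < Ns s := Finset.card_pos.mpr ⟨i, by simp [hi]⟩
  rw [nsmul_eq_mul]
  push_cast [hpos]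
  ring

lemma sum_w (p : ℝ) (i : Fin n) :
    ∑ s : Fin n → Bool, (if s i = true then w p s else 0) = p := by
  have h1 : ∀ s : Fin n → Bool,
      (if s i = true then w p s else 0)
        = ∏ k, (if k = i then (if s k then p else 0) else (if s k then p else 1 - p)) := by
    intro s
    by_cases h : s i = true
    · rw [if_pos h]
      refine Finset.prod_congr rfl fun k _ => ?_
      by_cases hk : k = i
      · subst hk; simp [h]
      · simp [hk]
    · rw [if_neg h]
      refine (Finset.prod_eq_zero (Finset.mem_univ i) ?_).symm
      simp at h
      simp [h]
  rw [Finset.sum_congr rfl fun s _ => h1 s]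
  have := (Finset.prod_univ_sum (fun _ : Fin n => (univ : Finset Bool))
      (fun k b => (if k = i then (if b then p else 0) else (if b then p else 1 - p)))).symm
  rw [Fintype.piFinset_univ] at this
  rw [this]
  have h2 : ∀ k : Fin n,
      (∑ b : Bool, (if k = i then (if b then p else 0) else (if b then p else 1 - p)))
        = if k = i then p else 1 := by
    intro k; by_cases hk : k = i <;> simp [hk]
  rw [Finset.prod_congr rfl fun k _ => h2 k]
  simp

lemma T_le (hn : 2 ≤ n) {p : ℝ} (hp : p ∈ Set.Icc (0:ℝ) 1) {i j : Fin n} (hij : j ≠ i) :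
    T p i j ≤ p / n := by
  have hn0 : (0:ℝ) < n := by positivity
  have hn1 : (0:ℝ) < (n:ℝ) - 1 := by
    have : (2:ℝ) ≤ n := by exact_mod_cast hn
    linarith
  have h1 : ∑ j' ∈ univ.erase i, T p i j' = ((n:ℝ) - 1) * T p i j := by
    rw [Finset.sum_congr rfl fun j' hj' => T_swap p hij (Finset.mem_erase.mp hj').1,
      Finset.sum_const, Finset.card_erase_of_mem (Finset.mem_univ i), Finset.card_univ,
      Fintype.card_fin, nsmul_eq_mul]
    congr 1
    have : 1 ≤ n := by omega
    push_cast [this]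
    ring
  have h2 : ∑ j' ∈ univ.erase i, T p i j'
      = ∑ s : Fin n → Bool, (if s i = true then w p s / Ns s * ((Ns s : ℝ) - 1) else 0) := by
    unfold T
    rw [Finset.sum_comm]
    refine Finset.sum_congr rfl fun s _ => ?_
    by_cases hsi : s i = true
    · rw [if_pos hsi, sum_erase s hsi (w p s / Ns s)]
    · simp [hsi]
  have h3 : ∀ s : Fin n → Bool,
      (if s i = true then w p s / Ns s * ((Ns s : ℝ) - 1) else 0)
        ≤ (if s i = true then w p s else 0) * (((n:ℝ) - 1) / n) := by
    intro s
    by_cases hsi : s i = true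
    · rw [if_pos hsi, if_pos hsi]
      have hNpos : 0 < Ns s := Finset.card_pos.mpr ⟨i, by simp [hsi]⟩
      have hNpos' : (0:ℝ) < Ns s := by exact_mod_cast hNpos
      have hNle : (Ns s : ℝ) ≤ n := by exact_mod_cast Ns_le s
      have hw := w_nonneg hp s
      have hfrac : ((Ns s : ℝ) - 1) / Ns s ≤ ((n:ℝ) - 1) / n := by
        rw [div_le_div_iff₀ hNpos' hn0]
        nlinarith
      calc w p s / Ns s * ((Ns s : ℝ) - 1) = w p s * (((Ns s : ℝ) - 1) / Ns s) := by ring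
        _ ≤ w p s * (((n:ℝ) - 1) / n) := by
            apply mul_le_mul_of_nonneg_left hfrac hw
    · simp [hsi]
  have h4 : ((n:ℝ) - 1) * T p i j ≤ p * (((n:ℝ) - 1) / n) := by
    rw [← h1, h2]
    calc ∑ s : Fin n → Bool, (if s i = true then w p s / Ns s * ((Ns s : ℝ) - 1) else 0)
        ≤ ∑ s : Fin n → Bool, (if s i = true then w p s else 0) * (((n:ℝ) - 1) / n) :=
          Finset.sum_le_sum fun s _ => h3 s
      _ = p * (((n:ℝ) - 1) / n) := by rw [← Finset.sum_mul, sum_w]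
  have h5 : T p i j ≤ p * (((n:ℝ) - 1) / n) / ((n:ℝ) - 1) := by
    rw [le_div_iff₀ hn1, mul_comm]
    exact h4
  calc T p i j ≤ p * (((n:ℝ) - 1) / n) / ((n:ℝ) - 1) := h5
    _ = p / n := by field_simp

end ProbGoAux

/-- Measurable structure on permutations of `Fin n` (the discrete σ-algebra). -/
instance instMeasurableSpacePermFin (n : ℕ) : MeasurableSpace (Equiv.Perm (Fin n)) := ⊤

instance (n : ℕ) : MeasurableSingletonClass (Equiv.Perm (Fin n)) :=
  ⟨fun _ => MeasurableSpace.measurableSet_top⟩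

set_option maxHeartbeats 1600000 in
/-- In the partially predictable arrival model, each of `n` customers independently
joins the stochastic group with probability `p`, and the members of the stochastic
group are rearranged by a uniformly random permutation fixing everyone else.  The
probability that customer `i` is in the stochastic group and is sent to a particular
other position `j ≠ i` is at most `p/n`. -/
theorem prob_go_to_other_location
    (n : ℕ) (hn : 2 ≤ n) (p : ℝ) (hp : p ∈ Set.Icc (0 : ℝ) 1)
    (μ : Measure ((Fin n → Bool) × Equiv.Perm (Fin n))) [IsProbabilityMeasure μ]
    (hμ : ∀ (s : Fin n → Bool) (π : Equiv.Perm (Fin n)),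
      μ {x | x = (s, π)} =
        ENNReal.ofReal ((∏ i, if s i then p else 1 - p) *
          (if ∀ i, s i = false → π i = i then
            (1 : ℝ) / (Nat.card {σ : Equiv.Perm (Fin n) // ∀ i, s i = false → σ i = i})
          else 0)))
    (i j : Fin n) (hij : i ≠ j) :
    μ {x | x.1 i = true ∧ x.2 i = j} ≤ ENNReal.ofReal (p / n) := by
  classical
  set f : (Fin n → Bool) × Equiv.Perm (Fin n) → ℝ := fun x =>
    ProbGoAux.w p x.1 *
      (if ∀ k, x.1 k = false → x.2 k = k then
        (1 : ℝ) / (Nat.card {σ : Equiv.Perm (Fin n) // ∀ k, x.1 k = false → σ k = k})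
      else 0) with hf
  have hf_nonneg : ∀ x, 0 ≤ f x := by
    intro x
    apply mul_nonneg (ProbGoAux.w_nonneg hp x.1)
    split
    · positivity
    · exact le_rfl
  have inner : ∀ s : Fin n → Bool,
      ∑ π : Equiv.Perm (Fin n), (if s i = true ∧ π i = j then f (s, π) else 0)
        ≤ (if s i = true ∧ s j = true then ProbGoAux.w p s / ProbGoAux.Ns s else 0) := by
    intro s
    by_cases hsi : s i = true
    · by_cases hsj : s j = true
      · rw [if_pos ⟨hsi, hsj⟩]
        have hterm : ∀ π : Equiv.Perm (Fin n),
            (if s i = true ∧ π i = j then f (s, π) else 0)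
              = if ((∀ k, s k = false → π k = k) ∧ π i = j) then
                  ProbGoAux.w p s *
                    ((1:ℝ) / (Nat.card {σ : Equiv.Perm (Fin n) // ∀ k, s k = false → σ k = k}))
                else 0 := by
          intro π
          by_cases h1 : π i = j <;> by_cases h2 : ∀ k, s k = false → π k = k <;>
            simp [hf, hsi, h1, h2]
        rw [Finset.sum_congr rfl fun π _ => hterm π, ← Finset.sum_filter,
          Finset.sum_const, nsmul_eq_mul]
        have hcount := ProbGoAux.count_le (s := s) (i := i) (j := j) hsj
        rw [← ProbGoAux.natCard_eq] at hcount
        have hKpos : 0 < Nat.card {σ : Equiv.Perm (Fin n) // ∀ k, s k = false → σ k = k} :=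
          ProbGoAux.natCard_pos s
        have hKpos' : (0:ℝ) < Nat.card {σ : Equiv.Perm (Fin n) // ∀ k, s k = false → σ k = k} := by
          exact_mod_cast hKpos
        have hNpos : 0 < ProbGoAux.Ns s := Finset.card_pos.mpr ⟨i, by simp [hsi]⟩
        have hNpos' : (0:ℝ) < ProbGoAux.Ns s := by exact_mod_cast hNpos
        have hw := ProbGoAux.w_nonneg hp s
        have hratio : ((univ.filter fun π : Equiv.Perm (Fin n) =>
              (∀ k, s k = false → π k = k) ∧ π i = j).card : ℝ)
              / (Nat.card {σ : Equiv.Perm (Fin n) // ∀ k, s k = false → σ k = k})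
            ≤ 1 / ProbGoAux.Ns s := by
          rw [div_le_div_iff₀ hKpos' hNpos', one_mul]
          exact_mod_cast hcount
        calc ((univ.filter fun π : Equiv.Perm (Fin n) =>
              (∀ k, s k = false → π k = k) ∧ π i = j).card : ℝ)
              * (ProbGoAux.w p s *
                ((1:ℝ) / (Nat.card {σ : Equiv.Perm (Fin n) // ∀ k, s k = false → σ k = k})))
            = ProbGoAux.w p s *
              (((univ.filter fun π : Equiv.Perm (Fin n) =>
                (∀ k, s k = false → π k = k) ∧ π i = j).card : ℝ)
                / (Nat.card {σ : Equiv.Perm (Fin n) // ∀ k, s k = false → σ k = k})) := by ring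
          _ ≤ ProbGoAux.w p s * (1 / ProbGoAux.Ns s) :=
              mul_le_mul_of_nonneg_left hratio hw
          _ = ProbGoAux.w p s / ProbGoAux.Ns s := by ring
      · have hterm : ∀ π : Equiv.Perm (Fin n),
            (if s i = true ∧ π i = j then f (s, π) else 0) = 0 := by
          intro π
          by_cases h1 : π i = j
          · have h2 : ¬ ∀ k, s k = false → π k = k := by
              intro h2
              have hjj := h2 j (by simp at hsj; exact hsj)
              exact hij (π.injective (h1.trans hjj.symm))
            simp [hf, h1, h2]
          · simp [h1]
        simp [hterm, hsj]
    · simp [hsi]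
  set A : Finset ((Fin n → Bool) × Equiv.Perm (Fin n)) :=
    univ.filter (fun x => x.1 i = true ∧ x.2 i = j) with hA
  have hE : {x : (Fin n → Bool) × Equiv.Perm (Fin n) | x.1 i = true ∧ x.2 i = j} = ↑A := by
    ext x; simp [hA]
  rw [hE]
  have hsplit : μ (↑A) = ∑ x ∈ A, μ {x} := by
    rw [show (↑A : Set ((Fin n → Bool) × Equiv.Perm (Fin n))) = ⋃ x ∈ A, {x} from
      (Set.biUnion_of_singleton _).symm]
    rw [measure_biUnion_finset ?_ fun b _ => measurableSet_singleton b]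
    intro x _ y _ hxy
    simp [Function.onFun, Set.disjoint_singleton, hxy]
  rw [hsplit]
  have hsing : ∀ x : (Fin n → Bool) × Equiv.Perm (Fin n), μ {x} = ENNReal.ofReal (f x) := by
    intro x
    have h := hμ x.1 x.2
    rw [Set.setOf_eq_eq_singleton] at h
    simpa [hf, ProbGoAux.w] using h
  rw [Finset.sum_congr rfl fun x _ => hsing x,
    ← ENNReal.ofReal_sum_of_nonneg (fun x _ => hf_nonneg x)]
  apply ENNReal.ofReal_le_ofReal
  calc ∑ x ∈ A, f x
      = ∑ s : Fin n → Bool, ∑ π : Equiv.Perm (Fin n),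
          (if s i = true ∧ π i = j then f (s, π) else 0) := by
        rw [hA, Finset.sum_filter, Fintype.sum_prod_type]
    _ ≤ ∑ s : Fin n → Bool,
          (if s i = true ∧ s j = true then ProbGoAux.w p s / ProbGoAux.Ns s else 0) :=
        Finset.sum_le_sum fun s _ => inner s
    _ = ProbGoAux.T p i j := rfl
    _ ≤ p / n := ProbGoAux.T_le hn hp (Ne.symm hij)
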